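/- Let $Q$ be the generator matrix of a continuous-time Markov chain on $n$ states (i.e., $q_{ij}\ge 0$ for $i\neq j$, $\sum_j q_{ij}=0$), let $r\in[0,\infty)^n$, $\theta>0$, and set $A=Q-\tfrac{\theta}{2}\mathrm{diag}(r)$. Then for every $t\in[0,T]$, the vector $\varphi(t)=e^{A(T-t)}e_n$ (where $e_n$ is the all-ones vector) has all components strictly positive, and $\varphi$ is the unique solution of $\varphi'(t)=-A\varphi(t)$ on $[0,T)$ with terminal condition $\varphi(T)=e_n$. -/

import Mathlib

open Set

noncomputable section expAux

open NormedSpace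

attribute [local instance] Matrix.linftyOpNormedAddCommGroup Matrix.linftyOpNormedRing
  Matrix.linftyOpNormedAlgebra

variable {n : ℕ}

private def entryCLM (n : ℕ) (i j : Fin n) : Matrix (Fin n) (Fin n) ℝ →L[ℝ] ℝ :=
  LinearMap.toContinuousLinearMap
    { toFun := fun X => X i j
      map_add' := fun _ _ => rfl
      map_smul' := fun _ _ => rfl }

@[simp] private lemma entryCLM_apply (i j : Fin n) (X : Matrix (Fin n) (Fin n) ℝ) :
    entryCLM n i j X = X i j := rfl

private def mulVecB (n : ℕ) :
    Matrix (Fin n) (Fin n) ℝ →L[ℝ] ((Fin n → ℝ) →L[ℝ] (Fin n → ℝ)) :=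
  LinearMap.toContinuousLinearMap
    { toFun := fun X => LinearMap.toContinuousLinearMap X.mulVecLin
      map_add' := by
        intro X Y; ext v i
        simp [Matrix.add_mulVec]
      map_smul' := by
        intro c X; ext v i
        simp [Matrix.smul_mulVec] }

@[simp] private lemma mulVecB_apply (X : Matrix (Fin n) (Fin n) ℝ) (v : Fin n → ℝ) :
    mulVecB n X v = X.mulVec v := rfl

private lemma summable_entry (X : Matrix (Fin n) (Fin n) ℝ) (i j : Fin n) :
    Summable fun k : ℕ => ((k.factorial : ℝ)⁻¹) * (X ^ k) i j := by
  have h := (expSeries_summable' (𝕂 := ℝ) X).map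
    (entryCLM n i j).toLinearMap.toAddMonoidHom (entryCLM n i j).continuous
  simpa [Function.comp_def] using h

private lemma exp_entry (X : Matrix (Fin n) (Fin n) ℝ) (i j : Fin n) :
    exp X i j = ∑' k : ℕ, ((k.factorial : ℝ)⁻¹) * (X ^ k) i j := by
  have h := (entryCLM n i j).map_tsum (expSeries_summable' (𝕂 := ℝ) X)
  rw [exp_eq_tsum (𝕂 := ℝ)]
  simpa using h

private lemma exp_mulVec_entry (X : Matrix (Fin n) (Fin n) ℝ) (v : Fin n → ℝ) (i : Fin n) :
    (exp X).mulVec v i = ∑' k : ℕ, ((k.factorial : ℝ)⁻¹) * ((X ^ k).mulVec v i) := by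
  have hs : ∀ j, Summable fun k : ℕ => ((k.factorial : ℝ)⁻¹) * (X ^ k) i j * v j := fun j =>
    (summable_entry X i j).mul_right _
  calc (exp X).mulVec v i
      = ∑ j, (∑' k : ℕ, ((k.factorial : ℝ)⁻¹) * (X ^ k) i j) * v j := by
        simp [Matrix.mulVec, dotProduct, exp_entry]
    _ = ∑ j, ∑' k : ℕ, ((k.factorial : ℝ)⁻¹) * (X ^ k) i j * v j := by
        simp_rw [tsum_mul_right]
    _ = ∑' k : ℕ, ∑ j, ((k.factorial : ℝ)⁻¹) * (X ^ k) i j * v j :=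
        (Summable.tsum_finsetSum fun j _ => hs j).symm
    _ = _ := by
        congr 1; funext k
        simp [Matrix.mulVec, dotProduct, Finset.mul_sum, mul_assoc]

private lemma pow_entry_nonneg {X : Matrix (Fin n) (Fin n) ℝ} (hX : ∀ i j, 0 ≤ X i j) :
    ∀ (k : ℕ) (i j : Fin n), 0 ≤ (X ^ k) i j := by
  intro k
  induction k with
  | zero =>
    intro i j
    by_cases h : i = j <;> simp [Matrix.one_apply, h]
  | succ k ih =>
    intro i j
    rw [pow_succ, Matrix.mul_apply]
    exact Finset.sum_nonneg fun l _ => mul_nonneg (ih i l) (hX l j)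

private lemma exp_entry_nonneg {X : Matrix (Fin n) (Fin n) ℝ} (hX : ∀ i j, 0 ≤ X i j)
    (i j : Fin n) : 0 ≤ exp X i j := by
  rw [exp_entry]
  exact tsum_nonneg fun k => mul_nonneg (by positivity) (pow_entry_nonneg hX k i j)

private lemma one_le_exp_diag {X : Matrix (Fin n) (Fin n) ℝ} (hX : ∀ i j, 0 ≤ X i j)
    (i : Fin n) : 1 ≤ exp X i i := by
  rw [exp_entry]
  have h0 : ((Nat.factorial 0 : ℝ)⁻¹) * (X ^ 0) i i = 1 := by simp
  calc (1 : ℝ) = ((Nat.factorial 0 : ℝ)⁻¹) * (X ^ 0) i i := h0.symm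
    _ ≤ _ := Summable.le_tsum (summable_entry X i i) 0 fun k _ =>
        mul_nonneg (by positivity) (pow_entry_nonneg hX k i i)

private lemma exp_smul_one (d : ℝ) :
    exp (d • (1 : Matrix (Fin n) (Fin n) ℝ)) =
      Real.exp d • (1 : Matrix (Fin n) (Fin n) ℝ) := by
  erw [← Algebra.algebraMap_eq_smul_one, ← algebraMap_exp_comm, Real.exp_eq_exp_ℝ,
    Algebra.algebraMap_eq_smul_one]

private lemma exp_mulVec_one_pos {A : Matrix (Fin n) (Fin n) ℝ}
    (hAoff : ∀ i j, i ≠ j → 0 ≤ A i j) (hAdiag : ∀ i, A i i ≤ 0) {s : ℝ} (hs : 0 ≤ s)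
    (i : Fin n) : 0 < (exp (s • A)).mulVec (fun _ => 1) i := by
  set c : ℝ := ∑ l, -(A l l) with hc
  have hcl : ∀ l, -(A l l) ≤ c := fun l =>
    Finset.single_le_sum (f := fun l => -(A l l))
      (fun m _ => neg_nonneg.2 (hAdiag m)) (Finset.mem_univ l)
  set B : Matrix (Fin n) (Fin n) ℝ := A + c • (1 : Matrix (Fin n) (Fin n) ℝ) with hB
  have hBnn : ∀ i j, 0 ≤ B i j := by
    intro i j
    by_cases h : i = j
    · subst h
      have := hcl i
      simp only [hB, Matrix.add_apply, Matrix.smul_apply, Matrix.one_apply_eq, smul_eq_mul,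
        mul_one]
      linarith
    · simpa [hB, Matrix.one_apply_ne h] using hAoff i j h
  have hsB : ∀ i j, 0 ≤ (s • B) i j := fun i j => by
    simpa using mul_nonneg hs (hBnn i j)
  have hsplit : s • A = (-(s * c)) • (1 : Matrix (Fin n) (Fin n) ℝ) + s • B := by
    rw [hB]; module
  have hcomm : Commute ((-(s * c)) • (1 : Matrix (Fin n) (Fin n) ℝ)) (s • B) :=
    (Commute.one_left (s • B)).smul_left _
  rw [hsplit, Matrix.exp_add_of_commute _ _ hcomm, exp_smul_one]
  have hmv : ((Real.exp (-(s * c)) • (1 : Matrix (Fin n) (Fin n) ℝ)) *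
      exp (s • B)).mulVec (fun _ => 1) i =
      Real.exp (-(s * c)) * ∑ j, exp (s • B) i j := by
    rw [Matrix.smul_mul, one_mul, Matrix.smul_mulVec]
    simp [Matrix.mulVec, dotProduct]
  rw [hmv]
  have h1 : (1 : ℝ) ≤ ∑ j, exp (s • B) i j :=
    le_trans (one_le_exp_diag hsB i)
      (Finset.single_le_sum (f := fun j => exp (s • B) i j)
        (fun j _ => exp_entry_nonneg hsB i j) (Finset.mem_univ i))
  have := Real.exp_pos (-(s * c))
  nlinarith

/-- For a generator matrix `Q`, nonnegative rates `r`, and `A = Q - (θ/2) diag r`,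
the vector `φ(t) = e^{A(T-t)} 𝟙` is strictly positive on `[0,T]`, and it is the
unique solution of `φ' = -Aφ` on `[0,T)` with terminal condition `φ(T) = 𝟙`. -/
theorem stmt_2 (n : ℕ) (T : ℝ) (hT : 0 ≤ T)
    (Q : Matrix (Fin n) (Fin n) ℝ)
    (hQoff : ∀ i j, i ≠ j → 0 ≤ Q i j)
    (hQrow : ∀ i, ∑ j, Q i j = 0)
    (r : Fin n → ℝ) (hr : ∀ i, 0 ≤ r i)
    (θ : ℝ) (hθ : 0 < θ)
    (A : Matrix (Fin n) (Fin n) ℝ)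
    (hA : A = Q - (θ / 2) • Matrix.diagonal r)
    (φ : ℝ → Fin n → ℝ)
    (hφ : ∀ t i, φ t i =
      ∑' k : ℕ, ((T - t) ^ k / (Nat.factorial k : ℝ)) * (A ^ k).mulVec (fun _ => 1) i) :
    (∀ t ∈ Icc (0 : ℝ) T, ∀ i, 0 < φ t i) ∧
    (∀ t ∈ Ico (0 : ℝ) T, HasDerivAt φ (-(A.mulVec (φ t))) t) ∧
    (φ T = fun _ => 1) ∧
    (∀ ψ : ℝ → Fin n → ℝ, ContinuousOn ψ (Icc 0 T) →
      (∀ t ∈ Ico (0 : ℝ) T, HasDerivWithinAt ψ (-(A.mulVec (ψ t))) (Icc 0 T) t) →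
      (ψ T = fun _ => 1) → ∀ t ∈ Icc (0 : ℝ) T, ψ t = φ t) := by
  -- basic sign facts about A
  have hAoff : ∀ i j, i ≠ j → 0 ≤ A i j := by
    intro i j hij
    have h : A i j = Q i j := by
      rw [hA]; simp [Matrix.sub_apply, Matrix.diagonal_apply_ne _ hij]
    rw [h]; exact hQoff i j hij
  have hQdiag : ∀ i, Q i i ≤ 0 := by
    intro i
    have h := hQrow i
    rw [← Finset.add_sum_erase _ _ (Finset.mem_univ i)] at h
    have hnn : 0 ≤ ∑ j ∈ Finset.univ.erase i, Q i j :=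
      Finset.sum_nonneg fun j hj => hQoff i j (Finset.ne_of_mem_erase hj).symm
    linarith
  have hAdiag : ∀ i, A i i ≤ 0 := by
    intro i
    have h : A i i = Q i i - θ / 2 * r i := by rw [hA]; simp
    have hθ2 : (0 : ℝ) ≤ θ / 2 := by positivity
    nlinarith [hr i, hQdiag i]
  -- expressing φ through the matrix exponential
  have hφg : ∀ t, φ t = (exp ((T - t) • A)).mulVec (fun _ => 1) := by
    intro t; funext i
    rw [hφ, exp_mulVec_entry]
    congr 1; funext k
    rw [smul_pow, Matrix.smul_mulVec]
    simp only [Pi.smul_apply, smul_eq_mul, div_eq_mul_inv]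
    ring
  -- derivative of the matrix exponential flow
  have hg : ∀ t : ℝ, HasDerivAt (fun u : ℝ => exp ((T - u) • A))
      (-(A * exp ((T - t) • A))) t := by
    intro t
    have h1 := hasDerivAt_exp_smul_const' (𝕂 := ℝ) A (T - t)
    have h2 : HasDerivAt (fun u : ℝ => T - u) (-1) t := (hasDerivAt_id t).const_sub T
    have h3 := h1.scomp t h2
    simp [Function.comp_def] at h3; exact h3
  have hderφ : ∀ t : ℝ, HasDerivAt φ (-(A.mulVec (φ t))) t := by
    intro t
    have h := (mulVecB n).hasFDerivAt.comp_hasDerivAt t (hg t)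
    have heq : (fun u : ℝ => mulVecB n (exp ((T - u) • A)) (fun _ => 1)) = φ := by
      funext u; rw [hφg u]; rfl
    have h2 := h.clm_apply (hasDerivAt_const t (fun _ : Fin n => (1 : ℝ)))
    simp only [Function.comp_def] at h2
    rw [heq] at h2
    refine h2.congr_deriv ?_
    simp only [mulVecB_apply, map_zero, add_zero]
    rw [hφg t, Matrix.mulVec_mulVec]
    exact Matrix.neg_mulVec (fun _ : Fin n => (1 : ℝ)) (A * exp ((T - t) • A))
  refine ⟨?_, fun t ht => hderφ t, ?_, ?_⟩
  · intro t ht i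
    rw [hφg t]
    exact exp_mulVec_one_pos hAoff hAdiag (sub_nonneg.2 ht.2) i
  · rw [hφg T]
    simp [Matrix.one_mulVec]
  -- uniqueness
  · intro ψ hψc hψd hψT
    have hw : ∀ t : ℝ, HasDerivAt (fun u : ℝ => exp ((u - T) • A))
        (A * exp ((t - T) • A)) t := by
      intro t
      have h1 := hasDerivAt_exp_smul_const' (𝕂 := ℝ) A (t - T)
      have h2 : HasDerivAt (fun u : ℝ => u - T) 1 t := (hasDerivAt_id t).sub_const T
      have h3 := h1.scomp t h2
      simp [Function.comp_def] at h3; exact h3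
    have hcomm : ∀ t : ℝ, A * exp ((t - T) • A) = exp ((t - T) • A) * A := by
      intro t
      exact (((Commute.refl A).smul_right (t - T)).exp_right).eq
    have hc : ∀ t : ℝ, HasDerivAt (fun u : ℝ => mulVecB n (exp ((u - T) • A)))
        (mulVecB n (A * exp ((t - T) • A))) t := fun t =>
      (mulVecB n).hasFDerivAt.comp_hasDerivAt t (hw t)
    set u : ℝ → Fin n → ℝ := fun t => (exp ((t - T) • A)).mulVec (ψ t) with hu
    have hu0 : ∀ t ∈ Ico (0 : ℝ) T, HasDerivWithinAt u 0 (Ici t) t := by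
      intro t ht
      have hd := ((hc t).hasDerivWithinAt (s := Icc 0 T)).clm_apply (hψd t ht)
      have hzero : mulVecB n (A * exp ((t - T) • A)) (ψ t) +
          mulVecB n (exp ((t - T) • A)) (-(A.mulVec (ψ t))) = 0 := by
        simp only [mulVecB_apply]
        rw [Matrix.mulVec_neg, Matrix.mulVec_mulVec, ← hcomm t]
        simp
      rw [hzero] at hd
      have hmem : Icc (0 : ℝ) T ∈ nhdsWithin t (Ici t) := by
        refine Filter.mem_of_superset (inter_mem_nhdsWithin (Ici t) (Iic_mem_nhds ht.2)) ?_
        rintro y ⟨hy1, hy2⟩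
        exact ⟨le_trans ht.1 hy1, hy2⟩
      exact hd.mono_of_mem_nhdsWithin hmem
    have hu_cont : ContinuousOn u (Icc 0 T) := by
      have hwc : Continuous fun t : ℝ => mulVecB n (exp ((t - T) • A)) :=
        continuous_iff_continuousAt.2 fun t => (hc t).continuousAt
      exact hwc.continuousOn.clm_apply hψc
    have hconst := constant_of_has_deriv_right_zero hu_cont hu0
    have huT : u T = fun _ => 1 := by
      rw [hu]
      simp [hψT, Matrix.one_mulVec]
    intro t ht
    have hut : u t = fun _ => 1 := by
      rw [hconst t ht, ← hconst T (right_mem_Icc.2 hT), huT]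
    have hinv : exp ((T - t) • A) * exp ((t - T) • A) = 1 := by
      rw [← Matrix.exp_add_of_commute _ _ (((Commute.refl A).smul_left (T - t)).smul_right (t - T))]
      rw [← add_smul]
      simp
    have : φ t = ψ t := by
      rw [hφg t, ← hut, hu, Matrix.mulVec_mulVec, hinv, Matrix.one_mulVec]
    exact this.symm

end expAux
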